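/- Let n ≥ 4, p = p₀(n) = (n+1+√(n²+10n−7))/(2(n−1)), let R > 0 with 8R ≥ 1, let j ≥ 1 be an integer with a_j = 3·4^{j−1} − 1, and let A > 0. Suppose F ∈ C²([a_jR, T)) satisfies F'(a_jR) ≥ 0 and F''(t) ≥ A (t − a_jR)^{(n−1)(1−p/2)} ( log( (t+(a_j−2)R) / (2(a_j−1)R) ) )^{(p^j−1)/(p−1)} for a_jR ≤ t < T. Then for all t with (a_j+1)R ≤ t < T one has F'(t) ≥ ( A / ( 2^{n−(n−1)p/2} a_j ) ) · ( t − (a_j+1)R )^{n−(n−1)p/2} ( log( (t+(a_j+1)R) / (2(a_j+1)R) ) )^{(p^j−1)/(p−1)}. -/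

import Mathlib

set_option maxHeartbeats 1000000

/-- `a_j = 3·4^{j-1} - 1`. -/
noncomputable def aseq (j : ℕ) : ℝ := 3 * 4 ^ (j - 1) - 1

/-- **First integration step** (beginning of the proof of Proposition 4.1):
a logarithmic lower bound for `F''` on `[a_jR, T)` together with
`F'(a_jR) ≥ 0` yields, for `(a_j+1)R ≤ t < T`,
`F'(t) ≥ (A / (2^{n-(n-1)p/2} a_j)) (t-(a_j+1)R)^{n-(n-1)p/2}
  (log((t+(a_j+1)R)/(2(a_j+1)R)))^{(p^j-1)/(p-1)}`. -/
theorem first_integration_step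
    (n : ℕ) (hn : 4 ≤ n) (p R A T : ℝ) (j : ℕ) (hj : 1 ≤ j)
    (hp : p = ((n : ℝ) + 1 + Real.sqrt ((n : ℝ) ^ 2 + 10 * (n : ℝ) - 7)) / (2 * ((n : ℝ) - 1)))
    (hR : 0 < R) (h8R : 1 ≤ 8 * R) (hA : 0 < A)
    (F F' F'' : ℝ → ℝ)
    (hF' : ∀ t ∈ Set.Ico (aseq j * R) T, HasDerivWithinAt F (F' t) (Set.Ico (aseq j * R) T) t)
    (hF'' : ∀ t ∈ Set.Ico (aseq j * R) T, HasDerivWithinAt F' (F'' t) (Set.Ico (aseq j * R) T) t)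
    (hcont : ContinuousOn F'' (Set.Ico (aseq j * R) T))
    (hF'0 : 0 ≤ F' (aseq j * R))
    (hlow : ∀ t, aseq j * R ≤ t → t < T →
      A * (t - aseq j * R) ^ (((n : ℝ) - 1) * (1 - p / 2)) *
          Real.log ((t + (aseq j - 2) * R) / (2 * (aseq j - 1) * R)) ^
            ((p ^ j - 1) / (p - 1)) ≤ F'' t) :
    ∀ t, (aseq j + 1) * R ≤ t → t < T →
      A / ((2 : ℝ) ^ ((n : ℝ) - ((n : ℝ) - 1) * p / 2) * aseq j) *
          (t - (aseq j + 1) * R) ^ ((n : ℝ) - ((n : ℝ) - 1) * p / 2) *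
          Real.log ((t + (aseq j + 1) * R) / (2 * (aseq j + 1) * R)) ^
            ((p ^ j - 1) / (p - 1)) ≤ F' t := by
  intro t hts htT
  set a : ℝ := aseq j with ha_def
  have ha2 : (2:ℝ) ≤ a := by
    have h4 : (1:ℝ) ≤ 4 ^ (j - 1) := one_le_pow₀ (by norm_num)
    simp only [ha_def, aseq]; linarith
  have hn4 : (4:ℝ) ≤ (n:ℝ) := by exact_mod_cast hn
  -- facts about p
  have hp1 : 1 < p := by
    have hsq : (n:ℝ) ≤ Real.sqrt ((n:ℝ) ^ 2 + 10 * n - 7) := by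
      have h1 : Real.sqrt ((n:ℝ)^2) ≤ Real.sqrt ((n:ℝ) ^ 2 + 10 * n - 7) :=
        Real.sqrt_le_sqrt (by nlinarith)
      rwa [Real.sqrt_sq (by linarith)] at h1
    rw [hp, lt_div_iff₀ (by linarith : (0:ℝ) < 2 * ((n:ℝ) - 1))]
    linarith
  have hp2 : p ≤ 2 := by
    have hsq : Real.sqrt ((n:ℝ) ^ 2 + 10 * n - 7) ≤ 3 * n - 5 := by
      have h1 : Real.sqrt ((n:ℝ) ^ 2 + 10 * n - 7) ≤ Real.sqrt ((3 * (n:ℝ) - 5)^2) :=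
        Real.sqrt_le_sqrt (by nlinarith)
      rwa [Real.sqrt_sq (by linarith)] at h1
    rw [hp, div_le_iff₀ (by linarith : (0:ℝ) < 2 * ((n:ℝ) - 1))]
    linarith
  set q : ℝ := (n:ℝ) - ((n:ℝ) - 1) * p / 2 with hq_def
  have hq1 : 1 ≤ q := by
    rw [hq_def]
    nlinarith [mul_nonneg (by linarith : (0:ℝ) ≤ (n:ℝ) - 1) (by linarith : (0:ℝ) ≤ 2 - p)]
  have hq0 : 0 < q := by linarith
  set β : ℝ := (p ^ j - 1) / (p - 1) with hβ_def
  have hβ : 0 ≤ β :=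
    div_nonneg (by nlinarith [one_le_pow₀ hp1.le (n := j)]) (by linarith)
  -- geometry of points
  have haR : a * R < (a + 1) * R := by nlinarith
  have htaR : a * R ≤ t := le_of_lt (lt_of_lt_of_le haR hts)
  have ha1 : (0:ℝ) < a + 1 := by linarith
  set s₀ : ℝ := ((a - 1) * t + (a + 1) * R) / (a + 1) with hs₀_def
  have hs₀aR : a * R ≤ s₀ := by
    rw [hs₀_def, le_div_iff₀ ha1]
    nlinarith [mul_nonneg (by linarith : (0:ℝ) ≤ a - 1) (by linarith : (0:ℝ) ≤ t - (a + 1) * R)]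
  have hs₀t : s₀ ≤ t := by
    rw [hs₀_def, div_le_iff₀ ha1]
    nlinarith [mul_pos ha1 hR]
  -- the target logarithm
  set M : ℝ := Real.log ((t + (a + 1) * R) / (2 * (a + 1) * R)) with hM_def
  have hden : (0:ℝ) < 2 * (a + 1) * R := by positivity
  have hM : 0 ≤ M := by
    apply Real.log_nonneg
    rw [le_div_iff₀ hden]
    nlinarith
  -- L(s) ≥ M for s ≥ s₀
  have hL : ∀ s, s₀ ≤ s →
      M ≤ Real.log ((s + (a - 2) * R) / (2 * (a - 1) * R)) := by
    intro s hs
    apply Real.log_le_log (div_pos (by nlinarith) hden)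
    rw [div_le_div_iff₀ hden (by nlinarith : (0:ℝ) < 2 * (a - 1) * R)]
    have hs' : (a - 1) * t + (a + 1) * R ≤ s * (a + 1) := by
      rw [hs₀_def, div_le_iff₀ ha1] at hs; linarith
    nlinarith [mul_nonneg hR.le (by linarith : (0:ℝ) ≤ s * (a + 1) - ((a - 1) * t + (a + 1) * R))]
  set c : ℝ := A * M ^ β with hc_def
  have hc : 0 ≤ c := mul_nonneg hA.le (Real.rpow_nonneg hM β)
  -- continuity of F'
  have hF'cont : ContinuousOn F' (Set.Ico (a * R) T) := fun s hs =>
    (hF'' s hs).continuousWithinAt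
  have hexp : ((n:ℝ) - 1) * (1 - p / 2) = q - 1 := by rw [hq_def]; ring
  have hF''nonneg : ∀ s, a * R ≤ s → s < T → 0 ≤ F'' s := by
    intro s h1 h2
    refine le_trans ?_ (hlow s h1 h2)
    have h3 : 0 ≤ (s - a * R) ^ (((n:ℝ) - 1) * (1 - p / 2)) :=
      Real.rpow_nonneg (by linarith) _
    have hlog : 0 ≤ Real.log ((s + (a - 2) * R) / (2 * (a - 1) * R)) := by
      apply Real.log_nonneg
      rw [le_div_iff₀ (by nlinarith : (0:ℝ) < 2 * (a - 1) * R)]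
      nlinarith
    have h4 : 0 ≤ Real.log ((s + (a - 2) * R) / (2 * (a - 1) * R)) ^ β :=
      Real.rpow_nonneg hlog β
    exact mul_nonneg (mul_nonneg hA.le h3) h4
  -- F' is monotone on [aR, t]
  have hsub : Set.Icc (a * R) t ⊆ Set.Ico (a * R) T := fun s hs =>
    ⟨hs.1, lt_of_le_of_lt hs.2 htT⟩
  have hmemIco : ∀ s, s ∈ Set.Ioo (a * R) t → Set.Ico (a * R) T ∈ nhds s := fun s hs =>
    Ico_mem_nhds hs.1 (lt_trans hs.2 htT)
  have hF'mono : MonotoneOn F' (Set.Icc (a * R) t) := by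
    apply monotoneOn_of_deriv_nonneg (convex_Icc _ _) (hF'cont.mono hsub)
    · intro s hs
      rw [interior_Icc] at hs
      exact ((hF'' s (hsub ⟨hs.1.le, hs.2.le⟩)).hasDerivAt
        (hmemIco s hs)).differentiableAt.differentiableWithinAt
    · intro s hs
      rw [interior_Icc] at hs
      rw [((hF'' s (hsub ⟨hs.1.le, hs.2.le⟩)).hasDerivAt (hmemIco s hs)).deriv]
      exact hF''nonneg s hs.1.le (lt_trans hs.2 htT)
  have hF's₀ : 0 ≤ F' s₀ :=
    le_trans hF'0 (hF'mono ⟨le_refl _, htaR⟩ ⟨hs₀aR, hs₀t⟩ hs₀aR)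
  -- the comparison function g
  set g : ℝ → ℝ := fun s => F' s - c / q * (s - a * R) ^ q with hg_def
  have hsub2 : Set.Icc s₀ t ⊆ Set.Icc (a * R) t := fun s hs => ⟨le_trans hs₀aR hs.1, hs.2⟩
  have hgmono : MonotoneOn g (Set.Icc s₀ t) := by
    apply monotoneOn_of_deriv_nonneg (convex_Icc _ _)
    · apply ContinuousOn.sub (hF'cont.mono (hsub2.trans hsub))
      exact (continuous_const.mul ((continuous_id.sub continuous_const).rpow_const
        (fun x => Or.inr hq0.le))).continuousOn
    · intro s hs
      rw [interior_Icc] at hs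
      have hs' : s ∈ Set.Ioo (a * R) t := ⟨lt_of_le_of_lt hs₀aR hs.1, hs.2⟩
      have h1 : HasDerivAt F' (F'' s) s :=
        (hF'' s (hsub ⟨hs'.1.le, hs'.2.le⟩)).hasDerivAt (hmemIco s hs')
      have h2 : HasDerivAt (fun y => (y - a * R) ^ q) (1 * q * (s - a * R) ^ (q - 1)) s :=
        ((hasDerivAt_id s).sub_const (a * R)).rpow_const (Or.inr hq1)
      exact (h1.sub (h2.const_mul (c / q))).differentiableAt.differentiableWithinAt
    · intro s hs
      rw [interior_Icc] at hs
      have hs' : s ∈ Set.Ioo (a * R) t := ⟨lt_of_le_of_lt hs₀aR hs.1, hs.2⟩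
      have h1 : HasDerivAt F' (F'' s) s :=
        (hF'' s (hsub ⟨hs'.1.le, hs'.2.le⟩)).hasDerivAt (hmemIco s hs')
      have h2 : HasDerivAt (fun y => (y - a * R) ^ q) (1 * q * (s - a * R) ^ (q - 1)) s :=
        ((hasDerivAt_id s).sub_const (a * R)).rpow_const (Or.inr hq1)
      rw [show deriv g s = _ from (h1.sub (h2.const_mul (c / q))).deriv]
      have hcd : c / q * (1 * q * (s - a * R) ^ (q - 1)) = c * (s - a * R) ^ (q - 1) := by
        field_simp
      rw [hcd, sub_nonneg]
      have hlows := hlow s hs'.1.le (lt_trans hs'.2 htT)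
      rw [hexp] at hlows
      have hXq : 0 ≤ (s - a * R) ^ (q - 1) :=
        Real.rpow_nonneg (by nlinarith [hs'.1.le] : (0:ℝ) ≤ s - a * R) _
      have h3 : M ^ β ≤ Real.log ((s + (a - 2) * R) / (2 * (a - 1) * R)) ^ β :=
        Real.rpow_le_rpow hM (hL s hs.1.le) hβ
      calc c * (s - a * R) ^ (q - 1)
          = A * (s - a * R) ^ (q - 1) * M ^ β := by rw [hc_def]; ring
        _ ≤ A * (s - a * R) ^ (q - 1) *
              Real.log ((s + (a - 2) * R) / (2 * (a - 1) * R)) ^ β := by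
            apply mul_le_mul_of_nonneg_left h3 (by positivity)
        _ ≤ F'' s := hlows
  have hg : g s₀ ≤ g t := hgmono ⟨le_refl _, hs₀t⟩ ⟨hs₀t, le_refl _⟩ hs₀t
  have h5 : c / q * ((t - a * R) ^ q - (s₀ - a * R) ^ q) ≤ F' t := by
    simp only [hg_def] at hg
    rw [mul_sub]
    linarith
  -- arithmetic bounds
  set X : ℝ := t - (a + 1) * R with hX_def
  have hX : 0 ≤ X := by rw [hX_def]; linarith
  have e1 : t - a * R = X + R := by rw [hX_def]; ring
  have e2 : s₀ - a * R = (a - 1) / (a + 1) * X := by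
    rw [hs₀_def, hX_def]; field_simp; ring
  have hr0 : (0:ℝ) < (a - 1) / (a + 1) := div_pos (by linarith) ha1
  have b1 : X ^ q ≤ (X + R) ^ q := Real.rpow_le_rpow hX (by linarith) hq0.le
  have b2 : ((a - 1) / (a + 1) * X) ^ q = ((a - 1) / (a + 1)) ^ q * X ^ q :=
    Real.mul_rpow hr0.le hX
  have b3 : ((a - 1) / (a + 1)) ^ q ≤ (a - 1) / (a + 1) := by
    have h := Real.rpow_le_rpow_of_exponent_ge hr0
      (by rw [div_le_one ha1]; linarith) hq1
    rwa [Real.rpow_one] at h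
  have hXq : 0 ≤ X ^ q := Real.rpow_nonneg hX q
  have b4 : 2 / (a + 1) * X ^ q ≤ (t - a * R) ^ q - (s₀ - a * R) ^ q := by
    rw [e1, e2, b2]
    have hb : ((a - 1) / (a + 1)) ^ q * X ^ q ≤ (a - 1) / (a + 1) * X ^ q :=
      mul_le_mul_of_nonneg_right b3 hXq
    have hid : (1 - (a - 1) / (a + 1)) = 2 / (a + 1) := by
      field_simp; norm_num
    nlinarith [b1, hb]
  have hbern : q + 1 ≤ (2:ℝ) ^ q := by
    have h := one_add_mul_self_le_rpow_one_add (by norm_num : (-1:ℝ) ≤ 1) hq1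
    norm_num at h
    linarith
  have h2q : (0:ℝ) < (2:ℝ) ^ q := Real.rpow_pos_of_pos (by norm_num) q
  have hfrac : 1 / ((2:ℝ) ^ q * a) ≤ 2 / (q * (a + 1)) := by
    rw [div_le_div_iff₀ (by positivity) (by positivity)]
    nlinarith [mul_le_mul_of_nonneg_right hbern (by linarith : (0:ℝ) ≤ a)]
  have hgoal : A / ((2:ℝ) ^ q * a) * X ^ q * M ^ β = c * X ^ q * (1 / ((2:ℝ) ^ q * a)) := by
    rw [hc_def]; ring
  rw [hgoal]
  calc c * X ^ q * (1 / ((2:ℝ) ^ q * a))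
      ≤ c * X ^ q * (2 / (q * (a + 1))) :=
        mul_le_mul_of_nonneg_left hfrac (by positivity)
    _ = c / q * (2 / (a + 1) * X ^ q) := by
        field_simp
    _ ≤ c / q * ((t - a * R) ^ q - (s₀ - a * R) ^ q) :=
        mul_le_mul_of_nonneg_left b4 (div_nonneg hc hq0.le)
    _ ≤ F' t := h5
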